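/- Let p be an odd prime, fix ε ∈ {−1,1}, δ₂ ∈ 𝔽_pˣ, δ₁, δ₃, δ₄ ∈ 𝔽_p, and let A = (𝔽_p³ × 𝔽₂, ·, ∘) be the skew brace obtained from the construction with B = (𝔽_p³, +, ∘), (x₁,x₂,x₃) ∘ (y₁,y₂,y₃) = (x₁+y₁+x₃y₂, x₂+y₂, x₃+y₃), C = 𝔽₂, φ_c = P^c, γ_c = Q^c, ψ_c = R^c for P = [[−1,(1/2)δ₁δ₂,δ₁],[0,−1,0],[0,δ₂,1]], Q = [[ε,δ₃,−(1/2)(ε+1)δ₁],[0,−ε,0],[0,(1/2)(ε−1)δ₂,−1]], R = [[1,δ₄,−(1/2)δ₁],[0,−1,0],[0,0,−1]]; the operations are (x,c)·(x',c') = (x + φ_c(x'), c+c') and ((φ_cγ_c)(x), c) ∘ ((φ_{c'}γ_{c'})(x'), c') = ((φ_{c+c'}γ_{c+c'})(ψ_{c'}⁻¹(x) ∘ x'), c+c'). If y = (y₁,y₂,y₃) ∈ 𝔽_p³ is such that ((φ₁γ₁)(y), 1) squares to the identity (0,0) under · and also squares to (0,0) under ∘, then δ₂y₂ + 2y₃ =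 0 and 2y₁ + δ₄y₂ − (1/2)δ₁y₃ − y₃y₂ = 0. -/

import Mathlib

/-- The multiplicative operation of the skew brace `B = (𝔽_p³, +, ∘)`:
`(x₁,x₂,x₃) ∘ (y₁,y₂,y₃) = (x₁ + y₁ + x₃y₂, x₂ + y₂, x₃ + y₃)`. -/
def circH {p : ℕ} (x y : Fin 3 → ZMod p) : Fin 3 → ZMod p :=
  ![x 0 + y 0 + x 2 * y 1, x 1 + y 1, x 2 + y 2]

/-- The matrix `P` defining `φ`. -/
def Pmat (p : ℕ) (δ₁ δ₂ : ZMod p) : Matrix (Fin 3) (Fin 3) (ZMod p) :=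
  !![-1, (2 : ZMod p)⁻¹ * (δ₁ * δ₂), δ₁; 0, -1, 0; 0, δ₂, 1]

/-- The matrix `Q` defining `γ`. -/
def Qmat (p : ℕ) (ε δ₁ δ₂ δ₃ : ZMod p) : Matrix (Fin 3) (Fin 3) (ZMod p) :=
  !![ε, δ₃, -((2 : ZMod p)⁻¹ * ((ε + 1) * δ₁)); 0, -ε, 0;
     0, (2 : ZMod p)⁻¹ * ((ε - 1) * δ₂), -1]

/-- The matrix `R` defining `ψ`. -/
def Rmat (p : ℕ) (δ₁ δ₄ : ZMod p) : Matrix (Fin 3) (Fin 3) (ZMod p) :=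
  !![1, δ₄, -((2 : ZMod p)⁻¹ * δ₁); 0, -1, 0; 0, 0, -1]

/-- The additive operation of the skew brace `A = (𝔽_p³ × 𝔽₂, ·, ∘)`:
`(x, c) · (x', c') = (x + φ_c(x'), c + c')` with `φ_c = P^c`. -/
noncomputable def dotA (p : ℕ) (δ₁ δ₂ : ZMod p)
    (a b : (Fin 3 → ZMod p) × ZMod 2) : (Fin 3 → ZMod p) × ZMod 2 :=
  (a.1 + (Pmat p δ₁ δ₂ ^ a.2.val).mulVec b.1, a.2 + b.2)

/-- The multiplicative operation of the skew brace `A = (𝔽_p³ × 𝔽₂, ·, ∘)`: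
`((φ_cγ_c)(x), c) ∘ ((φ_{c'}γ_{c'})(x'), c') = ((φ_{c+c'}γ_{c+c'})(ψ_{c'}⁻¹(x) ∘ x'), c+c')`,
written directly as
`(x, c) ∘ (x', c') = ((φ_{c+c'}γ_{c+c'})(ψ_{c'}⁻¹((γ_c⁻¹φ_c⁻¹)(x)) ∘ (γ_{c'}⁻¹φ_{c'}⁻¹)(x')), c+c')`,
with `φ_c = P^c`, `γ_c = Q^c`, `ψ_c = R^c`. -/
noncomputable def circA (p : ℕ) (ε δ₁ δ₂ δ₃ δ₄ : ZMod p)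
    (a b : (Fin 3 → ZMod p) × ZMod 2) : (Fin 3 → ZMod p) × ZMod 2 :=
  ((Pmat p δ₁ δ₂ ^ (a.2 + b.2).val * Qmat p ε δ₁ δ₂ δ₃ ^ (a.2 + b.2).val).mulVec
      (circH
        (((Rmat p δ₁ δ₄ ^ b.2.val)⁻¹).mulVec
          (((Qmat p ε δ₁ δ₂ δ₃ ^ a.2.val)⁻¹).mulVec
            (((Pmat p δ₁ δ₂ ^ a.2.val)⁻¹).mulVec a.1)))
        (((Qmat p ε δ₁ δ₂ δ₃ ^ b.2.val)⁻¹).mulVec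
          (((Pmat p δ₁ δ₂ ^ b.2.val)⁻¹).mulVec b.1))),
    a.2 + b.2)

/-- If `((φ₁γ₁)(y), 1)` squares to the identity `(0, 0)` under both operations of the
skew brace `A = (𝔽_p³ × 𝔽₂, ·, ∘)`, then `δ₂y₂ + 2y₃ = 0` and
`2y₁ + δ₄y₂ - (1/2)δ₁y₃ - y₃y₂ = 0`. -/
theorem order_two_element_constraints (p : ℕ) (hp : p.Prime) (hodd : Odd p)
    (ε : ZMod p) (hε : ε = 1 ∨ ε = -1) (δ₁ δ₂ δ₃ δ₄ : ZMod p) (hδ₂ : δ₂ ≠ 0)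
    (y : Fin 3 → ZMod p)
    (hdot : dotA p δ₁ δ₂ ((Pmat p δ₁ δ₂ * Qmat p ε δ₁ δ₂ δ₃).mulVec y, 1)
        ((Pmat p δ₁ δ₂ * Qmat p ε δ₁ δ₂ δ₃).mulVec y, 1) = (0, 0))
    (hcirc : circA p ε δ₁ δ₂ δ₃ δ₄ ((Pmat p δ₁ δ₂ * Qmat p ε δ₁ δ₂ δ₃).mulVec y, 1)
        ((Pmat p δ₁ δ₂ * Qmat p ε δ₁ δ₂ δ₃).mulVec y, 1) = (0, 0)) :
    δ₂ * y 1 + 2 * y 2 = 0 ∧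
    2 * y 0 + δ₄ * y 1 - (2 : ZMod p)⁻¹ * (δ₁ * y 2) - y 2 * y 1 = 0 := by
  haveI : Fact p.Prime := ⟨hp⟩
  have h2 : (2 : ZMod p) ≠ 0 := by
    intro h
    have hd : (p : ℕ) ∣ 2 := (ZMod.natCast_eq_zero_iff 2 p).mp (by exact_mod_cast h)
    have := (Nat.prime_dvd_prime_iff_eq hp Nat.prime_two).mp hd
    subst this
    simp [Nat.odd_iff] at hodd
  have hPP : Pmat p δ₁ δ₂ * Pmat p δ₁ δ₂ = 1 := by
    ext i j
    fin_cases i <;> fin_cases j <;>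
      simp [Pmat, Matrix.mul_apply, Fin.sum_univ_three, Matrix.one_apply,
        Matrix.vecHead, Matrix.vecTail]
    all_goals field_simp
    all_goals ring
  have hQQ : Qmat p ε δ₁ δ₂ δ₃ * Qmat p ε δ₁ δ₂ δ₃ = 1 := by
    ext i j
    fin_cases i <;> fin_cases j <;>
      simp [Qmat, Matrix.mul_apply, Fin.sum_univ_three, Matrix.one_apply,
        Matrix.vecHead, Matrix.vecTail]
    all_goals rcases hε with h | h <;> subst h
    all_goals field_simp
    all_goals ring
  have hRR : Rmat p δ₁ δ₄ * Rmat p δ₁ δ₄ = 1 := by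
    ext i j
    fin_cases i <;> fin_cases j <;>
      simp [Rmat, Matrix.mul_apply, Fin.sum_univ_three, Matrix.one_apply,
        Matrix.vecHead, Matrix.vecTail]
  have hPinv : (Pmat p δ₁ δ₂)⁻¹ = Pmat p δ₁ δ₂ := Matrix.inv_eq_right_inv hPP
  have hQinv : (Qmat p ε δ₁ δ₂ δ₃)⁻¹ = Qmat p ε δ₁ δ₂ δ₃ := Matrix.inv_eq_right_inv hQQ
  have hRinv : (Rmat p δ₁ δ₄)⁻¹ = Rmat p δ₁ δ₄ := Matrix.inv_eq_right_inv hRR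
  have hval1 : ((1 : ZMod 2)).val = 1 := rfl
  have hval0 : ((1 : ZMod 2) + 1).val = 0 := rfl
  -- dot condition
  have hd := congrArg Prod.fst hdot
  simp only [dotA, hval1, pow_one] at hd
  have hd2 := congrFun hd 2
  simp [Pmat, Qmat, Matrix.mulVec, Matrix.mul_apply, dotProduct,
    Fin.sum_univ_three, Matrix.vecHead, Matrix.vecTail] at hd2
  constructor
  · have key : (2 : ZMod p) * (δ₂ * y 1 + 2 * y 2) = 0 := by
      rcases hε with h | h <;> subst h <;> field_simp at hd2
      · linear_combination -hd2
      · linear_combination -hd2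
    exact (mul_eq_zero.mp key).resolve_left h2
  · -- circ condition
    have hc := congrArg Prod.fst hcirc
    simp only [circA, hval1, hval0, pow_zero, pow_one, Matrix.one_mul, Matrix.one_mulVec,
      hPinv, hQinv, hRinv] at hc
    have e1 : (Pmat p δ₁ δ₂).mulVec ((Pmat p δ₁ δ₂ * Qmat p ε δ₁ δ₂ δ₃).mulVec y)
        = (Qmat p ε δ₁ δ₂ δ₃).mulVec y := by
      rw [Matrix.mulVec_mulVec, ← Matrix.mul_assoc, hPP, Matrix.one_mul]
    have e2 : (Qmat p ε δ₁ δ₂ δ₃).mulVec ((Qmat p ε δ₁ δ₂ δ₃).mulVec y) = y := by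
      rw [Matrix.mulVec_mulVec, hQQ, Matrix.one_mulVec]
    rw [e1, e2] at hc
    have hc0 := congrFun hc 0
    simp [circH, Rmat, Matrix.mulVec, dotProduct, Fin.sum_univ_three,
      Matrix.vecHead, Matrix.vecTail] at hc0
    linear_combination hc0
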